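/- Let S, S̃ ⊆ ℝⁿ be linear subspaces with σ(S) = σ(S̃) and (+,…,+) ∈ σ(S^⊥), and let c* ∈ ℝⁿ with c* > 0. Then for every c' ∈ ℝⁿ with c' > 0, the set (c' + S) ∩ ℝⁿ_{≥0} ∩ { c* ∘ e^{ṽ} : ṽ ∈ S̃^⊥ } contains exactly one element. -/

import Mathlib

open Finset

/-- componentwise sign vector -/
noncomputable def sgn {n : ℕ} (x : Fin n → ℝ) : Fin n → ℝ := fun i => Real.sign (x i)

/-- set of sign vectors of a set -/
noncomputable def sgnSet {n : ℕ} (A : Set (Fin n → ℝ)) : Set (Fin n → ℝ) := sgn '' A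

/-- standard dot product -/
noncomputable def dotp {m : ℕ} (x y : Fin m → ℝ) : ℝ := ∑ i, x i * y i

/-- orthogonal complement of a set, as a set -/
noncomputable def perpSet {n : ℕ} (A : Set (Fin n → ℝ)) : Set (Fin n → ℝ) :=
  {y | ∀ x ∈ A, dotp x y = 0}

lemma rsign_eq_one_iff {x : ℝ} : Real.sign x = 1 ↔ 0 < x := by
  constructor
  · intro h
    rcases lt_trichotomy x 0 with hx|hx|hx
    · rw [Real.sign_of_neg hx] at h; norm_num at h
    · rw [hx, Real.sign_zero] at h; norm_num at h
    · exact hx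
  · exact Real.sign_of_pos

lemma rsign_eq_neg_one_iff {x : ℝ} : Real.sign x = -1 ↔ x < 0 := by
  constructor
  · intro h
    rcases lt_trichotomy x 0 with hx|hx|hx
    · exact hx
    · rw [hx, Real.sign_zero] at h; norm_num at h
    · rw [Real.sign_of_pos hx] at h; norm_num at h
  · exact Real.sign_of_neg

lemma same_sign_mul_nonneg {x y : ℝ} (h : Real.sign x = Real.sign y) : 0 ≤ x * y := by
  rcases lt_trichotomy y 0 with hy|hy|hy
  · have hx : x < 0 := rsign_eq_neg_one_iff.1 (h.trans (Real.sign_of_neg hy))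
    exact le_of_lt (mul_pos_of_neg_of_neg hx hy)
  · simp [hy]
  · have hx : 0 < x := rsign_eq_one_iff.1 (h.trans (Real.sign_of_pos hy))
    exact le_of_lt (mul_pos hx hy)

lemma same_sign_mul_pos {x y : ℝ} (h : Real.sign x = Real.sign y) (hy : y ≠ 0) : 0 < x * y := by
  rcases lt_trichotomy y 0 with hy'|hy'|hy'
  · have hx : x < 0 := rsign_eq_neg_one_iff.1 (h.trans (Real.sign_of_neg hy'))
    exact mul_pos_of_neg_of_neg hx hy'
  · exact absurd hy' hy
  · have hx : 0 < x := rsign_eq_one_iff.1 (h.trans (Real.sign_of_pos hy'))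
    exact mul_pos hx hy'

lemma dotp_pos_of_same_sign {n : ℕ} {z u : Fin n → ℝ}
    (h : ∀ i, Real.sign (z i) = Real.sign (u i)) (hu : u ≠ 0) : 0 < dotp z u := by
  obtain ⟨j, hj⟩ : ∃ j, u j ≠ 0 := by
    by_contra hne; push_neg at hne
    exact hu (funext fun i => hne i)
  exact Finset.sum_pos' (fun i _ => same_sign_mul_nonneg (h i))
    ⟨j, Finset.mem_univ j, same_sign_mul_pos (h j) hj⟩

lemma sign_mul_of_pos {a x : ℝ} (ha : 0 < a) : Real.sign (a * x) = Real.sign x := by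
  rcases lt_trichotomy x 0 with hx|hx|hx
  · rw [Real.sign_of_neg hx, Real.sign_of_neg (mul_neg_of_pos_of_neg ha hx)]
  · simp [hx]
  · rw [Real.sign_of_pos hx, Real.sign_of_pos (mul_pos ha hx)]

section core
variable {n : ℕ} {S St : Submodule ℝ (Fin n → ℝ)}

lemma core_inj (hST : sgnSet (S : Set (Fin n → ℝ)) ⊆ sgnSet (St : Set (Fin n → ℝ)))
    {a : Fin n → ℝ} (ha : ∀ i, 0 < a i) {u : Fin n → ℝ}
    (hu : ∀ x ∈ St, dotp x u = 0) (hmem : (fun i => a i * u i) ∈ S) : u = 0 := by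
  by_contra hne
  obtain ⟨z, hzSt, hsz⟩ : ∃ z ∈ (St : Set (Fin n → ℝ)), sgn z = sgn (fun i => a i * u i) :=
    hST ⟨_, hmem, rfl⟩
  have hsgn_au : ∀ i, Real.sign (z i) = Real.sign (u i) := fun i => by
    have := congrFun hsz i
    simpa [sgn, sign_mul_of_pos (ha i)] using this
  have := dotp_pos_of_same_sign hsgn_au hne
  rw [hu z hzSt] at this
  exact lt_irrefl 0 this

lemma core_bound (hST : sgnSet (S : Set (Fin n → ℝ)) ⊆ sgnSet (St : Set (Fin n → ℝ)))
    {u y : Fin n → ℝ} (hu : ∀ x ∈ St, dotp x u = 0) (hy : y ∈ S)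
    (hun : ∀ i, u i ≤ 0) (hex : ∃ i, u i < 0) (hyn : ∀ i, u i < 0 → y i < 0) : False := by
  obtain ⟨z, hzSt, hsz⟩ : ∃ z ∈ (St : Set (Fin n → ℝ)), sgn z = sgn y := hST ⟨_, hy, rfl⟩
  have hterm : ∀ i, u i < 0 → 0 < z i * u i := by
    intro i hi
    have hzi : z i < 0 := by
      have := congrFun hsz i
      simp only [sgn] at this
      rw [Real.sign_of_neg (hyn i hi)] at this
      exact rsign_eq_neg_one_iff.1 this
    exact mul_pos_of_neg_of_neg hzi hi
  have hpos : 0 < dotp z u := by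
    obtain ⟨j, hj⟩ := hex
    refine Finset.sum_pos' (fun i _ => ?_) ⟨j, Finset.mem_univ j, hterm j hj⟩
    rcases lt_or_eq_of_le (hun i) with h|h
    · exact le_of_lt (hterm i h)
    · simp [h]
  rw [hu z hzSt] at hpos
  exact lt_irrefl 0 hpos

end core

section elayer
variable {n : ℕ}

abbrev Epi (n : ℕ) := EuclideanSpace ℝ (Fin n)

noncomputable def toE {n : ℕ} : (Fin n → ℝ) ≃ₗ[ℝ] Epi n :=
  (WithLp.linearEquiv 2 ℝ (Fin n → ℝ)).symm

noncomputable def SE (S : Submodule ℝ (Fin n → ℝ)) : Submodule ℝ (Epi n) :=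
  S.comap (toE.symm.toLinearMap : Epi n →ₗ[ℝ] (Fin n → ℝ))

lemma mem_SE {S : Submodule ℝ (Fin n → ℝ)} {x : Epi n} : x ∈ SE S ↔ (toE.symm x) ∈ S := Iff.rfl

lemma toE_symm_apply (x : Epi n) (i : Fin n) : toE.symm x i = x i := rfl

lemma toE_apply (x : Fin n → ℝ) (i : Fin n) : (toE x : Epi n) i = x i := rfl

lemma inner_eq_dotp (x y : Epi n) : (inner ℝ x y : ℝ) = dotp (toE.symm x) (toE.symm y) := by
  simp [PiLp.inner_apply, RCLike.inner_apply, dotp, toE_symm_apply, mul_comm]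

lemma mem_SE_orth {S : Submodule ℝ (Fin n → ℝ)} {x : Epi n} :
    x ∈ (SE S)ᗮ ↔ ∀ z ∈ S, dotp z (toE.symm x) = 0 := by
  rw [Submodule.mem_orthogonal]
  constructor
  · intro h z hz
    have := h (toE z) (by rw [mem_SE]; simpa using hz)
    rw [inner_eq_dotp] at this
    simpa using this
  · intro h y hy
    rw [inner_eq_dotp]
    exact h _ (mem_SE.1 hy)

/-- componentwise multiplication, as a linear map on pi type -/
noncomputable def mulPi (a : Fin n → ℝ) : (Fin n → ℝ) →ₗ[ℝ] (Fin n → ℝ) where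
  toFun x := fun i => a i * x i
  map_add' x y := by funext i; simp [mul_add]
  map_smul' c x := by funext i; simp [smul_eq_mul]; ring

noncomputable def mulLin (a : Fin n → ℝ) : Epi n →ₗ[ℝ] Epi n :=
  toE.toLinearMap ∘ₗ (mulPi a) ∘ₗ toE.symm.toLinearMap

lemma mulLin_apply (a : Fin n → ℝ) (x : Epi n) (i : Fin n) : mulLin a x i = a i * x i := rfl

noncomputable def mulCLM (a : Fin n → ℝ) : Epi n →L[ℝ] Epi n :=
  (mulLin a).toContinuousLinearMap

lemma mulCLM_apply (a : Fin n → ℝ) (x : Epi n) (i : Fin n) : mulCLM a x i = a i * x i := rfl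

/-- the exponential-type map -/
noncomputable def Phi (c : Fin n → ℝ) : Epi n → Epi n :=
  fun v => toE fun i => c i * Real.exp (toE.symm v i)

lemma Phi_apply (c : Fin n → ℝ) (v : Epi n) (i : Fin n) : Phi c v i = c i * Real.exp (v i) := rfl

lemma hasStrictFDerivAt_Phi (c : Fin n → ℝ) (v : Epi n) :
    HasStrictFDerivAt (Phi c) (mulCLM (fun i => c i * Real.exp (v i))) v := by
  rw [hasStrictFDerivAt_piLp]
  intro i
  have h1 : HasStrictFDerivAt (fun x : Epi n => x i)
      (PiLp.proj (𝕜 := ℝ) 2 (fun _ : Fin n => ℝ) i) v :=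
    PiLp.hasStrictFDerivAt_apply (𝕜 := ℝ) 2 v i
  have h2 := (Real.hasStrictDerivAt_exp (v i)).comp_hasStrictFDerivAt v h1
  have h3 := h2.const_mul (c i)
  convert h3 using 1
  · rfl
  · rfl
  ext u
  simp only [ContinuousLinearMap.comp_apply, ContinuousLinearMap.smul_apply, PiLp.proj_apply,
    mulCLM_apply, smul_eq_mul]
  ring

lemma continuous_Phi (c : Fin n → ℝ) : Continuous (Phi c) :=
  continuous_iff_continuousAt.2 fun v => (hasStrictFDerivAt_Phi c v).continuousAt

end elayer

section mainsec
variable {n : ℕ} (S St : Submodule ℝ (Fin n → ℝ))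

lemma projV_eq_iff (x y : Epi n) :
    Submodule.orthogonalProjection (SE S)ᗮ x = Submodule.orthogonalProjection (SE S)ᗮ y ↔ x - y ∈ SE S := by
  rw [← sub_eq_zero, ← map_sub, Submodule.orthogonalProjectionOnto_eq_zero_iff,
    Submodule.orthogonal_orthogonal]

variable {S St}

lemma key_inj (hST : sgnSet (S : Set (Fin n → ℝ)) ⊆ sgnSet (St : Set (Fin n → ℝ)))
    {a : Fin n → ℝ} (ha : ∀ i, 0 < a i) {u : Epi n} (hu : u ∈ (SE St)ᗮ)
    (h0 : Submodule.orthogonalProjection (SE S)ᗮ (mulLin a u) = 0) : u = 0 := by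
  have hmemV : mulLin a u ∈ ((SE S)ᗮ)ᗮ := Submodule.orthogonalProjectionOnto_eq_zero_iff.1 h0
  rw [Submodule.orthogonal_orthogonal] at hmemV
  have hmemS : (fun i => a i * (toE.symm u) i) ∈ S := mem_SE.1 hmemV
  have hzero : toE.symm u = 0 := core_inj hST ha (mem_SE_orth.1 hu) hmemS
  have := toE.symm.map_eq_zero_iff.1 hzero
  exact this

lemma finrank_WV (hST : sgnSet (S : Set (Fin n → ℝ)) ⊆ sgnSet (St : Set (Fin n → ℝ)))
    (hTS : sgnSet (St : Set (Fin n → ℝ)) ⊆ sgnSet (S : Set (Fin n → ℝ))) :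
    Module.finrank ℝ ((SE St)ᗮ : Submodule ℝ (Epi n)) =
      Module.finrank ℝ ((SE S)ᗮ : Submodule ℝ (Epi n)) := by
  have hone : ∀ i : Fin n, (0:ℝ) < (fun _ : Fin n => (1:ℝ)) i := fun _ => one_pos
  have inj1 : Function.Injective
      ((Submodule.orthogonalProjection (SE S)ᗮ).toLinearMap ∘ₗ
        (mulLin (fun _ => 1)) ∘ₗ ((SE St)ᗮ : Submodule ℝ (Epi n)).subtype) := by
    intro u₁ u₂ h12
    rw [← sub_eq_zero]
    have h0 : ((Submodule.orthogonalProjection (SE S)ᗮ).toLinearMap ∘ₗ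
        (mulLin (fun _ => 1)) ∘ₗ ((SE St)ᗮ : Submodule ℝ (Epi n)).subtype) (u₁ - u₂) = 0 := by
      rw [map_sub, h12, sub_self]
    have := key_inj hST hone (u₁ - u₂).2 h0
    exact Subtype.ext this
  have inj2 : Function.Injective
      ((Submodule.orthogonalProjection (SE St)ᗮ).toLinearMap ∘ₗ
        (mulLin (fun _ => 1)) ∘ₗ ((SE S)ᗮ : Submodule ℝ (Epi n)).subtype) := by
    intro u₁ u₂ h12
    rw [← sub_eq_zero]
    have h0 : ((Submodule.orthogonalProjection (SE St)ᗮ).toLinearMap ∘ₗ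
        (mulLin (fun _ => 1)) ∘ₗ ((SE S)ᗮ : Submodule ℝ (Epi n)).subtype) (u₁ - u₂) = 0 := by
      rw [map_sub, h12, sub_self]
    have := key_inj (S := St) (St := S) hTS hone (u₁ - u₂).2 h0
    exact Subtype.ext this
  exact le_antisymm (LinearMap.finrank_le_finrank_of_injective inj1)
    (LinearMap.finrank_le_finrank_of_injective inj2)

variable (S St)

/-- the nonlinear map whose surjectivity we study -/
noncomputable def Fmap (cstar : Fin n → ℝ) :
    ((SE St)ᗮ : Submodule ℝ (Epi n)) → ((SE S)ᗮ : Submodule ℝ (Epi n)) :=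
  fun v => Submodule.orthogonalProjection (SE S)ᗮ (Phi cstar (v : Epi n))

variable {S St}

lemma hasStrict_F (cstar : Fin n → ℝ) (v₀ : ((SE St)ᗮ : Submodule ℝ (Epi n))) :
    HasStrictFDerivAt (Fmap S St cstar)
      ((Submodule.orthogonalProjection (SE S)ᗮ).comp
        ((mulCLM (fun i => cstar i * Real.exp ((v₀ : Epi n) i))).comp
          (((SE St)ᗮ : Submodule ℝ (Epi n)).subtypeL))) v₀ := by
  have h1 : HasStrictFDerivAt (fun v : ((SE St)ᗮ : Submodule ℝ (Epi n)) => (v : Epi n))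
      ((SE St)ᗮ : Submodule ℝ (Epi n)).subtypeL v₀ :=
    (((SE St)ᗮ : Submodule ℝ (Epi n)).subtypeL).hasStrictFDerivAt
  have h2 := (hasStrictFDerivAt_Phi cstar (v₀ : Epi n)).comp v₀ h1
  have h3 := (Submodule.orthogonalProjection (SE S)ᗮ).hasStrictFDerivAt.comp v₀ h2
  exact h3

lemma range_F_mem_nhds (hST : sgnSet (S : Set (Fin n → ℝ)) ⊆ sgnSet (St : Set (Fin n → ℝ)))
    (hTS : sgnSet (St : Set (Fin n → ℝ)) ⊆ sgnSet (S : Set (Fin n → ℝ)))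
    {cstar : Fin n → ℝ} (hc : ∀ i, 0 < cstar i) (v₀ : ((SE St)ᗮ : Submodule ℝ (Epi n))) :
    Set.range (Fmap S St cstar) ∈ nhds (Fmap S St cstar v₀) := by
  set a : Fin n → ℝ := fun i => cstar i * Real.exp ((v₀ : Epi n) i) with ha_def
  have ha : ∀ i, 0 < a i := fun i => mul_pos (hc i) (Real.exp_pos _)
  set DFlin : (((SE St)ᗮ : Submodule ℝ (Epi n)) →ₗ[ℝ] ((SE S)ᗮ : Submodule ℝ (Epi n))) :=
    (Submodule.orthogonalProjection (SE S)ᗮ).toLinearMap ∘ₗ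
      (mulLin a) ∘ₗ ((SE St)ᗮ : Submodule ℝ (Epi n)).subtype with hDF_def
  have hinj : Function.Injective DFlin := by
    intro u₁ u₂ h12
    rw [← sub_eq_zero]
    have h0 : DFlin (u₁ - u₂) = 0 := by rw [map_sub, h12, sub_self]
    exact Subtype.ext (key_inj hST ha (u₁ - u₂).2 h0)
  have hsurj : Function.Surjective DFlin :=
    (LinearMap.injective_iff_surjective_of_finrank_eq_finrank (finrank_WV hST hTS)).1 hinj
  let eDF := (LinearEquiv.ofBijective DFlin ⟨hinj, hsurj⟩).toContinuousLinearEquiv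
  have hcoe : (eDF : (((SE St)ᗮ : Submodule ℝ (Epi n)) →L[ℝ] ((SE S)ᗮ : Submodule ℝ (Epi n)))) =
      (Submodule.orthogonalProjection (SE S)ᗮ).comp
        ((mulCLM a).comp (((SE St)ᗮ : Submodule ℝ (Epi n)).subtypeL)) := by
    ext u
    rfl
  have hF : HasStrictFDerivAt (Fmap S St cstar)
      (eDF : (((SE St)ᗮ : Submodule ℝ (Epi n)) →L[ℝ] ((SE S)ᗮ : Submodule ℝ (Epi n)))) v₀ := by
    rw [hcoe]
    exact hasStrict_F cstar v₀
  rw [← hF.map_nhds_eq_of_equiv]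
  exact Filter.range_mem_map

/-- convex combination path in pi coordinates -/
noncomputable def gq (cstar c' : Fin n → ℝ) : ℝ → Epi n :=
  fun q => toE (fun i => (1 - q) * cstar i + q * c' i)

lemma gq_apply (cstar c' : Fin n → ℝ) (q : ℝ) (i : Fin n) :
    gq cstar c' q i = (1 - q) * cstar i + q * c' i := rfl

lemma continuous_gq (cstar c' : Fin n → ℝ) : Continuous (gq cstar c') := by
  have h : Continuous (fun q : ℝ => (fun i => (1 - q) * cstar i + q * c' i : Fin n → ℝ)) := by
    apply continuous_pi
    intro i
    fun_prop
  exact ((PiLp.continuousLinearEquiv 2 ℝ (fun _ : Fin n => ℝ)).symm.continuous.comp h : _)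

lemma gq_pos {cstar c' : Fin n → ℝ} (hc : ∀ i, 0 < cstar i) (hc' : ∀ i, 0 < c' i)
    {q : ℝ} (hq0 : 0 ≤ q) (hq1 : q ≤ 1) (i : Fin n) : 0 < gq cstar c' q i := by
  rw [gq_apply]
  rcases le_total (cstar i) (c' i) with h | h
  · have : cstar i ≤ (1 - q) * cstar i + q * c' i := by nlinarith [hc i]
    linarith [hc i]
  · have : c' i ≤ (1 - q) * cstar i + q * c' i := by nlinarith [hc' i]
    linarith [hc' i]

lemma gq_le_max {cstar c' : Fin n → ℝ} {q : ℝ} (hq0 : 0 ≤ q) (hq1 : q ≤ 1) (i : Fin n) :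
    gq cstar c' q i ≤ max (cstar i) (c' i) := by
  rw [gq_apply]
  rcases le_total (cstar i) (c' i) with h | h
  · have : (1 - q) * cstar i + q * c' i ≤ c' i := by nlinarith
    exact this.trans (le_max_right _ _)
  · have : (1 - q) * cstar i + q * c' i ≤ cstar i := by nlinarith
    exact this.trans (le_max_left _ _)

lemma tendsto_eval {x : ℕ → Epi n} {a : Epi n} (h : Filter.Tendsto x Filter.atTop (nhds a))
    (i : Fin n) : Filter.Tendsto (fun k => x k i) Filter.atTop (nhds (a i)) :=
  (((PiLp.proj (𝕜 := ℝ) 2 (fun _ : Fin n => ℝ) i).continuous.tendsto a).comp h : _)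

lemma apriori_bound
    (hST : sgnSet (S : Set (Fin n → ℝ)) ⊆ sgnSet (St : Set (Fin n → ℝ)))
    {cstar c' w : Fin n → ℝ} (hc : ∀ i, 0 < cstar i) (hc' : ∀ i, 0 < c' i)
    (hw : ∀ x ∈ S, dotp x w = 0) (hwpos : ∀ i, 0 < w i) :
    ∃ R : ℝ, ∀ q : ℝ, q ∈ Set.Icc (0:ℝ) 1 → ∀ v : Epi n, v ∈ (SE St)ᗮ →
      Phi cstar v - gq cstar c' q ∈ SE S → ‖v‖ ≤ R := by
  classical
  set B : ℝ := ∑ i, max (cstar i) (c' i) * w i with hB_def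
  set C : Fin n → ℝ := fun j => B / w j with hC_def
  set M : Fin n → ℝ := fun j => Real.log (C j / cstar j) with hM_def
  -- componentwise bounds
  have hcomp : ∀ q ∈ Set.Icc (0:ℝ) 1, ∀ v : Epi n, v ∈ (SE St)ᗮ →
      Phi cstar v - gq cstar c' q ∈ SE S → ∀ j, Phi cstar v j ≤ C j ∧ v j ≤ M j := by
    intro q hq v hv hmem
    have hd : (fun i => Phi cstar v i - gq cstar c' q i) ∈ S := mem_SE.1 hmem
    have hdw : dotp (fun i => Phi cstar v i - gq cstar c' q i) w = 0 := hw _ hd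
    have hsum : ∑ i, Phi cstar v i * w i ≤ B := by
      have h1 : ∑ i, Phi cstar v i * w i = ∑ i, gq cstar c' q i * w i := by
        have : ∑ i, (Phi cstar v i - gq cstar c' q i) * w i = 0 := hdw
        rw [← sub_eq_zero, ← Finset.sum_sub_distrib]
        simpa [sub_mul] using this
      rw [h1]
      exact Finset.sum_le_sum fun i _ =>
        mul_le_mul_of_nonneg_right (gq_le_max hq.1 hq.2 i) (hwpos i).le
    intro j
    have hterm : Phi cstar v j * w j ≤ B := by
      refine le_trans ?_ hsum
      refine Finset.single_le_sum (f := fun i => Phi cstar v i * w i) (fun i _ => ?_)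
        (Finset.mem_univ j)
      have : 0 < Phi cstar v i := mul_pos (hc i) (Real.exp_pos _)
      exact le_of_lt (mul_pos this (hwpos i))
    have hPhiC : Phi cstar v j ≤ C j := (le_div_iff₀ (hwpos j)).2 hterm
    refine ⟨hPhiC, ?_⟩
    have hexp : Real.exp (v j) ≤ C j / cstar j := by
      rw [le_div_iff₀' (hc j)]
      exact hPhiC
    have hpos : 0 < C j / cstar j := lt_of_lt_of_le (Real.exp_pos _) hexp
    exact (Real.le_log_iff_exp_le hpos).2 hexp
  set Rx : ℝ := Real.sqrt (∑ i, (C i)^2) with hRx_def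
  have hxball : ∀ q ∈ Set.Icc (0:ℝ) 1, ∀ v : Epi n, v ∈ (SE St)ᗮ →
      Phi cstar v - gq cstar c' q ∈ SE S → ‖Phi cstar v‖ ≤ Rx := by
    intro q hq v hv hmem
    rw [EuclideanSpace.norm_eq]
    apply Real.sqrt_le_sqrt
    refine Finset.sum_le_sum fun i _ => ?_
    have h1 : 0 < Phi cstar v i := mul_pos (hc i) (Real.exp_pos _)
    have h2 : Phi cstar v i ≤ C i := (hcomp q hq v hv hmem i).1
    have : ‖Phi cstar v i‖ = Phi cstar v i := Real.norm_of_nonneg h1.le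
    rw [this]
    exact pow_le_pow_left₀ h1.le h2 2
  by_contra hcon
  push_neg at hcon
  have hseq : ∀ k : ℕ, ∃ q ∈ Set.Icc (0:ℝ) 1, ∃ v : Epi n, v ∈ (SE St)ᗮ ∧
      (Phi cstar v - gq cstar c' q ∈ SE S) ∧ (k : ℝ) < ‖v‖ := by
    intro k
    obtain ⟨q, hq, v, hv, hmem, hn⟩ := hcon (k : ℝ)
    exact ⟨q, hq, v, hv, hmem, hn⟩
  choose q hq v hv hmem hn using hseq
  have hvpos : ∀ k : ℕ, 0 < ‖v k‖ := fun k => lt_of_le_of_lt (Nat.cast_nonneg k) (hn k)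
  set u : ℕ → Epi n := fun k => (‖v k‖)⁻¹ • v k with hu_def
  set x : ℕ → Epi n := fun k => Phi cstar (v k) with hx_def
  set z : ℕ → Epi n × Epi n × ℝ := fun k => (u k, x k, q k) with hz_def
  have hT : IsCompact ((Metric.sphere (0 : Epi n) 1) ×ˢ
      ((Metric.closedBall (0 : Epi n) Rx) ×ˢ (Set.Icc (0:ℝ) 1))) :=
    (isCompact_sphere 0 1).prod ((isCompact_closedBall 0 Rx).prod isCompact_Icc)
  have hzmem : ∀ k, z k ∈ (Metric.sphere (0 : Epi n) 1) ×ˢ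
      ((Metric.closedBall (0 : Epi n) Rx) ×ˢ (Set.Icc (0:ℝ) 1)) := by
    intro k
    refine ⟨?_, ?_, hq k⟩
    · simp only [mem_sphere_iff_norm, sub_zero]
      show ‖(‖v k‖)⁻¹ • v k‖ = 1
      simp only [norm_smul, norm_inv, norm_norm]
      exact inv_mul_cancel₀ (hvpos k).ne'
    · rw [Metric.mem_closedBall, dist_zero_right]
      exact hxball (q k) (hq k) (v k) (hv k) (hmem k)
  obtain ⟨⟨ubar, xbar, qbar⟩, hlimmem, φ, hφ, hz⟩ := hT.tendsto_subseq hzmem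
  have hulim : Filter.Tendsto (fun k => u (φ k)) Filter.atTop (nhds ubar) :=
    ((continuous_fst.tendsto _).comp hz : _)
  have hxlim : Filter.Tendsto (fun k => x (φ k)) Filter.atTop (nhds xbar) :=
    ((continuous_fst.tendsto _).comp ((continuous_snd.tendsto _).comp hz) : _)
  have hqlim : Filter.Tendsto (fun k => q (φ k)) Filter.atTop (nhds qbar) :=
    ((continuous_snd.tendsto _).comp ((continuous_snd.tendsto _).comp hz) : _)
  have hnormlim : Filter.Tendsto (fun k => ‖v (φ k)‖) Filter.atTop Filter.atTop := by
    apply Filter.tendsto_atTop_mono (fun k => (le_of_lt (hn (φ k)) : ((φ k : ℕ) : ℝ) ≤ ‖v (φ k)‖))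
    apply Filter.tendsto_atTop_mono (fun k => by exact_mod_cast Nat.cast_le.2 (hφ.le_apply) : _)
    exact tendsto_natCast_atTop_atTop
  have hinvlim : Filter.Tendsto (fun k => (‖v (φ k)‖)⁻¹) Filter.atTop (nhds 0) :=
    Filter.Tendsto.inv_tendsto_atTop hnormlim
  -- u has norm one
  have hubar_norm : ‖ubar‖ = 1 := by
    have := hlimmem.1
    rwa [mem_sphere_iff_norm, sub_zero] at this
  have hqbar : qbar ∈ Set.Icc (0:ℝ) 1 := hlimmem.2.2
  -- u ∈ (SE St)ᗮ
  have hubar_mem : ubar ∈ (SE St)ᗮ := by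
    have hcl : IsClosed ((SE St)ᗮ : Set (Epi n)) := Submodule.closed_of_finiteDimensional _
    exact hcl.mem_of_tendsto hulim
      (Filter.Eventually.of_forall fun k => Submodule.smul_mem _ _ (hv (φ k)))
  -- componentwise: ubar ≤ 0
  have hubar_nonpos : ∀ i, ubar i ≤ 0 := by
    intro i
    have hle : ∀ k, u (φ k) i ≤ (‖v (φ k)‖)⁻¹ * M i := by
      intro k
      have : u (φ k) i = (‖v (φ k)‖)⁻¹ * v (φ k) i := rfl
      rw [this]
      exact mul_le_mul_of_nonneg_left
        ((hcomp (q (φ k)) (hq (φ k)) (v (φ k)) (hv (φ k)) (hmem (φ k)) i).2)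
        (inv_nonneg.2 (norm_nonneg _))
    have hrhs : Filter.Tendsto (fun k => (‖v (φ k)‖)⁻¹ * M i) Filter.atTop (nhds 0) := by
      simpa using hinvlim.mul_const (M i)
    exact le_of_tendsto_of_tendsto' (tendsto_eval hulim i) hrhs hle
  -- limit membership: xbar - gq qbar ∈ SE S
  have hybar_mem : xbar - gq cstar c' qbar ∈ SE S := by
    have hcl : IsClosed ((SE S) : Set (Epi n)) := Submodule.closed_of_finiteDimensional _
    refine hcl.mem_of_tendsto (hxlim.sub (((continuous_gq cstar c').tendsto _).comp hqlim))
      (Filter.Eventually.of_forall fun k => hmem (φ k))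
  -- where ubar is negative, xbar vanishes
  have hxbar_zero : ∀ i, ubar i < 0 → xbar i = 0 := by
    intro i hi
    have hvi : Filter.Tendsto (fun k => v (φ k) i) Filter.atTop Filter.atBot := by
      have hev : ∀ᶠ k in Filter.atTop, u (φ k) i < ubar i / 2 :=
        (tendsto_eval hulim i).eventually_lt_const (by linarith)
      have hrhs : Filter.Tendsto (fun k => ‖v (φ k)‖ * (ubar i / 2)) Filter.atTop Filter.atBot :=
        Filter.Tendsto.atTop_mul_const_of_neg (by linarith) hnormlim
      apply Filter.tendsto_atBot_mono' _ _ hrhs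
      filter_upwards [hev] with k hk
      have hvu : v (φ k) i = ‖v (φ k)‖ * u (φ k) i := by
        have : u (φ k) i = (‖v (φ k)‖)⁻¹ * v (φ k) i := rfl
        rw [this, ← mul_assoc, mul_inv_cancel₀ (hvpos (φ k)).ne', one_mul]
      rw [hvu]
      exact mul_le_mul_of_nonneg_left hk.le (norm_nonneg _)
    have hxi : Filter.Tendsto (fun k => x (φ k) i) Filter.atTop (nhds 0) := by
      have : Filter.Tendsto (fun k => Real.exp (v (φ k) i)) Filter.atTop (nhds 0) :=
        Real.tendsto_exp_atBot.comp hvi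
      have h2 := this.const_mul (cstar i)
      rw [mul_zero] at h2
      exact h2
    exact tendsto_nhds_unique (tendsto_eval hxlim i) hxi
  -- contradiction via core_bound
  have hune : ∃ i, ubar i < 0 := by
    by_contra hz0
    push_neg at hz0
    have : ∀ i, ubar i = 0 := fun i => le_antisymm (hubar_nonpos i) (hz0 i)
    have : toE.symm ubar = 0 := funext fun i => this i
    have : ubar = 0 := toE.symm.map_eq_zero_iff.1 this
    rw [this] at hubar_norm
    simp at hubar_norm
  refine core_bound hST (mem_SE_orth.1 hubar_mem) (mem_SE.1 hybar_mem)
    (fun i => hubar_nonpos i) hune ?_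
  intro i hi
  have h1 : toE.symm (xbar - gq cstar c' qbar) i = xbar i - gq cstar c' qbar i := rfl
  rw [h1, hxbar_zero i hi, zero_sub, neg_neg_iff_pos]
  exact gq_pos hc hc' hqbar.1 hqbar.2 i

lemma exists_sol
    (hST : sgnSet (S : Set (Fin n → ℝ)) ⊆ sgnSet (St : Set (Fin n → ℝ)))
    (hTS : sgnSet (St : Set (Fin n → ℝ)) ⊆ sgnSet (S : Set (Fin n → ℝ)))
    {cstar c' w : Fin n → ℝ} (hc : ∀ i, 0 < cstar i) (hc' : ∀ i, 0 < c' i)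
    (hw : ∀ x ∈ S, dotp x w = 0) (hwpos : ∀ i, 0 < w i) :
    ∃ v : Epi n, v ∈ (SE St)ᗮ ∧ Phi cstar v - toE c' ∈ SE S := by
  classical
  set p : ℝ → ℝ := fun t => min (max t 0) 1 with hp_def
  have hp0 : ∀ t, 0 ≤ p t := fun t => le_min (le_max_right t 0) zero_le_one
  have hp1 : ∀ t, p t ≤ 1 := fun t => min_le_right _ _
  have hpcont : Continuous p := (continuous_id.max continuous_const).min continuous_const
  set A : Set ℝ :=
    {t | ∃ v : Epi n, v ∈ (SE St)ᗮ ∧ Phi cstar v - gq cstar c' (p t) ∈ SE S} with hA_def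
  have h0A : (0:ℝ) ∈ A := by
    refine ⟨0, Submodule.zero_mem _, ?_⟩
    have hp00 : p 0 = 0 := by simp [hp_def]
    have heq : Phi cstar (0 : Epi n) = gq cstar c' (p 0) := by
      rw [hp00]
      refine congrArg toE (funext fun i => ?_)
      show cstar i * Real.exp ((0 : Epi n) i) = (1 - 0) * cstar i + 0 * c' i
      have : ((0 : Epi n) i) = 0 := rfl
      rw [this, Real.exp_zero]
      ring
    rw [heq, sub_self]
    exact Submodule.zero_mem _
  set g : ℝ → ((SE S)ᗮ : Submodule ℝ (Epi n)) :=
    fun t => Submodule.orthogonalProjection (SE S)ᗮ (gq cstar c' (p t)) with hg_def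
  have hgcont : Continuous g :=
    (Submodule.orthogonalProjection (SE S)ᗮ).continuous.comp ((continuous_gq cstar c').comp hpcont)
  have hopen : IsOpen A := by
    rw [isOpen_iff_mem_nhds]
    rintro t₀ ⟨v, hvW, hvmem⟩
    have hr : Set.range (Fmap S St cstar) ∈ nhds (Fmap S St cstar ⟨v, hvW⟩) :=
      range_F_mem_nhds hST hTS hc ⟨v, hvW⟩
    have hFv : Fmap S St cstar ⟨v, hvW⟩ = g t₀ := (projV_eq_iff S _ _).2 hvmem
    rw [hFv] at hr
    have hev : ∀ᶠ t in nhds t₀, g t ∈ Set.range (Fmap S St cstar) :=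
      (hgcont.tendsto t₀).eventually_mem hr
    refine Filter.mem_of_superset hev ?_
    rintro t ⟨v', hFv'⟩
    exact ⟨(v' : Epi n), v'.2, (projV_eq_iff S _ _).1 hFv'⟩
  have hclosed : IsClosed A := by
    refine IsSeqClosed.isClosed ?_
    intro tk t htk hlim
    obtain ⟨R, hR⟩ := apriori_bound hST hc hc' hw hwpos
    choose vk hvk hmemk using htk
    have hb : ∀ k, vk k ∈ Metric.closedBall (0 : Epi n) R := by
      intro k
      rw [Metric.mem_closedBall, dist_zero_right]
      exact hR (p (tk k)) ⟨hp0 _, hp1 _⟩ (vk k) (hvk k) (hmemk k)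
    obtain ⟨vbar, _, φ, hφ, hvlim⟩ := (isCompact_closedBall (0 : Epi n) R).tendsto_subseq hb
    have hvbarW : vbar ∈ (SE St)ᗮ :=
      (Submodule.closed_of_finiteDimensional _).mem_of_tendsto hvlim
        (Filter.Eventually.of_forall fun k => hvk (φ k))
    refine ⟨vbar, hvbarW, ?_⟩
    have htend : Filter.Tendsto
        (fun k => Phi cstar (vk (φ k)) - gq cstar c' (p (tk (φ k)))) Filter.atTop
        (nhds (Phi cstar vbar - gq cstar c' (p t))) := by
      refine Filter.Tendsto.sub ?_ ?_
      · exact ((continuous_Phi cstar).tendsto vbar).comp hvlim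
      · exact (((continuous_gq cstar c').comp hpcont).tendsto t).comp
          (hlim.comp hφ.tendsto_atTop)
    exact (Submodule.closed_of_finiteDimensional _).mem_of_tendsto htend
      (Filter.Eventually.of_forall fun k => hmemk (φ k))
  have hA_univ : A = Set.univ := by
    rcases isClopen_iff.1 ⟨hclosed, hopen⟩ with h | h
    · exact absurd (h ▸ h0A) (Set.notMem_empty 0)
    · exact h
  have h1A : (1:ℝ) ∈ A := hA_univ ▸ Set.mem_univ 1
  obtain ⟨v, hvW, hvmem⟩ := h1A
  refine ⟨v, hvW, ?_⟩
  have hp11 : p 1 = 1 := by simp [hp_def]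
  have : gq cstar c' (p 1) = toE c' := by
    rw [hp11]
    refine congrArg toE (funext fun i => ?_)
    show (1 - 1) * cstar i + 1 * c' i = c' i
    ring
  rwa [this] at hvmem

end mainsec

lemma sign_exp_diff {c a b : ℝ} (hc : 0 < c) :
    Real.sign (c * Real.exp a - c * Real.exp b) = Real.sign (a - b) := by
  rcases lt_trichotomy a b with h|h|h
  · rw [Real.sign_of_neg (sub_neg.2 (mul_lt_mul_of_pos_left (Real.exp_lt_exp.2 h) hc)),
      Real.sign_of_neg (sub_neg.2 h)]
  · simp [h]
  · rw [Real.sign_of_pos (sub_pos.2 (mul_lt_mul_of_pos_left (Real.exp_lt_exp.2 h) hc)),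
      Real.sign_of_pos (sub_pos.2 h)]


theorem stmt13 {n : ℕ} (S St : Submodule ℝ (Fin n → ℝ))
    (hsgn : sgnSet (S : Set (Fin n → ℝ)) = sgnSet (St : Set (Fin n → ℝ)))
    (hplus : (fun _ => (1 : ℝ)) ∈ sgnSet (perpSet (S : Set (Fin n → ℝ))))
    (cstar : Fin n → ℝ) (hc : ∀ i, 0 < cstar i) :
    ∀ c' : Fin n → ℝ, (∀ i, 0 < c' i) →
      ∃! c : Fin n → ℝ,
        ((∃ u ∈ S, c = c' + u) ∧ ∀ i, 0 ≤ c i) ∧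
        ∃ v ∈ perpSet (St : Set (Fin n → ℝ)), c = fun i => cstar i * Real.exp (v i) := by
  intro c' hc'
  obtain ⟨w, hwperp, hwsgn⟩ := hplus
  have hwpos : ∀ i, 0 < w i := fun i => rsign_eq_one_iff.1 (congrFun hwsgn i)
  have hST : sgnSet (S : Set (Fin n → ℝ)) ⊆ sgnSet (St : Set (Fin n → ℝ)) := hsgn.le
  have hTS : sgnSet (St : Set (Fin n → ℝ)) ⊆ sgnSet (S : Set (Fin n → ℝ)) := hsgn.ge
  obtain ⟨v, hvW, hvmem⟩ := exists_sol hST hTS hc hc' hwperp hwpos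
  set v₀ : Fin n → ℝ := toE.symm v with hv₀_def
  set c₀ : Fin n → ℝ := fun i => cstar i * Real.exp (v₀ i) with hc₀_def
  have hu₀mem : (fun i => c₀ i - c' i) ∈ S := by
    have := mem_SE.1 hvmem
    exact this
  have hv₀perp : v₀ ∈ perpSet (St : Set (Fin n → ℝ)) := mem_SE_orth.1 hvW
  -- uniqueness helper: any two solutions are equal
  have huniq : ∀ c₁ c₂ : Fin n → ℝ,
      (((∃ u ∈ S, c₁ = c' + u) ∧ ∀ i, 0 ≤ c₁ i) ∧
        ∃ v₁ ∈ perpSet (St : Set (Fin n → ℝ)), c₁ = fun i => cstar i * Real.exp (v₁ i)) →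
      (((∃ u ∈ S, c₂ = c' + u) ∧ ∀ i, 0 ≤ c₂ i) ∧
        ∃ v₂ ∈ perpSet (St : Set (Fin n → ℝ)), c₂ = fun i => cstar i * Real.exp (v₂ i)) →
      c₁ = c₂ := by
    rintro c₁ c₂ ⟨⟨⟨u₁, hu₁S, hcu₁⟩, -⟩, v₁, hv₁, hcv₁⟩ ⟨⟨⟨u₂, hu₂S, hcu₂⟩, -⟩, v₂, hv₂, hcv₂⟩
    by_contra hne
    obtain ⟨i₀, hi₀⟩ := Function.ne_iff.1 hne
    have hymem : (fun i => c₁ i - c₂ i) ∈ S := by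
      have : (fun i => c₁ i - c₂ i) = u₁ - u₂ := by
        funext i
        have h1 : c₁ i = c' i + u₁ i := congrFun hcu₁ i
        have h2 : c₂ i = c' i + u₂ i := congrFun hcu₂ i
        rw [h1, h2]
        show (c' i + u₁ i) - (c' i + u₂ i) = u₁ i - u₂ i
        ring
      rw [this]
      exact S.sub_mem hu₁S hu₂S
    obtain ⟨z, hzSt, hsz⟩ : ∃ z ∈ (St : Set (Fin n → ℝ)), sgn z = sgn (fun i => c₁ i - c₂ i) :=
      hST ⟨_, hymem, rfl⟩
    have hsame : ∀ i, Real.sign (z i) = Real.sign (v₁ i - v₂ i) := by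
      intro i
      have h1 := congrFun hsz i
      simp only [sgn] at h1
      rw [h1, congrFun hcv₁ i, congrFun hcv₂ i]
      exact sign_exp_diff (hc i)
    have hdne : (fun i => v₁ i - v₂ i) ≠ 0 := by
      intro h0
      have hv12 : v₁ i₀ = v₂ i₀ := by
        have := congrFun h0 i₀
        simpa [sub_eq_zero] using this
      apply hi₀
      rw [congrFun hcv₁ i₀, congrFun hcv₂ i₀, hv12]
    have hpos := dotp_pos_of_same_sign hsame hdne
    have hzero : dotp z (fun i => v₁ i - v₂ i) = 0 := by
      have h1 : dotp z (fun i => v₁ i - v₂ i) = dotp z v₁ - dotp z v₂ := by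
        simp only [dotp, mul_sub]
        exact Finset.sum_sub_distrib ..
      rw [h1, hv₁ z hzSt, hv₂ z hzSt, sub_zero]
    rw [hzero] at hpos
    exact lt_irrefl 0 hpos
  refine ⟨c₀, ⟨⟨⟨fun i => c₀ i - c' i, hu₀mem, ?_⟩, fun i => ?_⟩, v₀, hv₀perp, rfl⟩, ?_⟩
  · funext i
    show c₀ i = c' i + (c₀ i - c' i)
    ring
  · exact (mul_pos (hc i) (Real.exp_pos _)).le
  · intro c hcprops
    exact huniq c c₀ hcprops ⟨⟨⟨fun i => c₀ i - c' i, hu₀mem, by funext i; show c₀ i = c' i + (c₀ i - c' i); ring⟩,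
      fun i => (mul_pos (hc i) (Real.exp_pos _)).le⟩, v₀, hv₀perp, rfl⟩
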